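/- Let k₀, j, m ∈ ℕ, let κ ∈ ℤ with κ ≤ k₀ + m − j, and let n ∈ ℤ. Then there exist complex numbers c_r for r = n−m, n−m+1, …, n+m+k₀−κ such that for every real x, x^j · (d/dx)^m ψ_{k₀,n}(x) = Σ_{r=n−m}^{n+m+k₀−κ} c_r · ψ_{κ,r}(x), where (d/dx)^m denotes the m-th iterated derivative. Moreover the outermost coefficients are c_{n−m} = (−i/2)^{k₀−κ−j+m} · (1/2)^j · Π_{t=1}^{m} (n − t + 1) and c_{n+m+k₀−κ} = (i/2)^{k₀−κ−j+m} · (1/2)^j · (−1)^m · Π_{t=1}^{m} (n + t + k₀) (empty products being 1; note k₀ − κ − j + m ≥ 0). -/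

import Mathlib

/-- The wavepacket basis function `ψ_{k,n}(x) = (x+i)^{-(k+1)} ((x-i)/(x+i))^n`. -/
noncomputable def psi (k n : ℤ) : ℝ → ℂ := fun x =>
  ((x : ℂ) + Complex.I) ^ (-(k + 1)) * (((x : ℂ) - Complex.I) / ((x : ℂ) + Complex.I)) ^ n

open Complex Finset

lemma psi_ne1 (x : ℝ) : (x:ℂ) + I ≠ 0 := by
  intro h
  have := congrArg Complex.im h
  simp at this

lemma psi_ne2 (x : ℝ) : (x:ℂ) - I ≠ 0 := by
  intro h
  have := congrArg Complex.im h
  simp at this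

lemma psi_shift_k (k r : ℤ) (x : ℝ) : ((x:ℂ) + I) * psi k r x = psi (k-1) r x := by
  unfold psi
  rw [show -(k-1+1) = -(k+1) + 1 by ring, zpow_add₀ (psi_ne1 x), zpow_one]
  ring

lemma psi_shift_n (k r : ℤ) (x : ℝ) :
    (((x:ℂ) - I)/((x:ℂ)+I)) * psi k r x = psi k (r+1) x := by
  unfold psi
  rw [zpow_add₀ (div_ne_zero (psi_ne2 x) (psi_ne1 x)), zpow_one]
  ring

lemma psi_shift_n' (k r : ℤ) (x : ℝ) :
    psi (k-1) (r+1) x = ((x:ℂ) - I) * psi k r x := by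
  rw [← psi_shift_n (k-1) r x, ← psi_shift_k k r x, div_mul_eq_mul_div, mul_div_assoc,
    mul_div_cancel_left₀ _ (psi_ne1 x)]

lemma psi_lower (k r : ℤ) (x : ℝ) :
    psi k r x = (-(I/2)) * psi (k-1) r x + (I/2) * psi (k-1) (r+1) x := by
  have h1 := psi_shift_k k r x
  have h2 := psi_shift_n' k r x
  linear_combination (-(I/2)) * h1 + (-(I/2)) * h2 + psi k r x * I_sq

lemma psi_mul_x (k r : ℤ) (x : ℝ) :
    (x:ℂ) * psi k r x = (1/2) * psi (k-1) r x + (1/2) * psi (k-1) (r+1) x := by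
  have h1 := psi_shift_k k r x
  have h2 := psi_shift_n' k r x
  linear_combination (1/2 : ℂ) * h1 - (1/2 : ℂ) * h2

lemma psi_eq (k n : ℤ) (x : ℝ) :
    psi k n x = ((x:ℂ) + I) ^ (-(k+1+n)) * ((x:ℂ) - I) ^ n := by
  unfold psi
  rw [div_zpow, div_eq_mul_inv, ← zpow_neg, show -(k+1+n) = -(k+1) + -n by ring,
    zpow_add₀ (psi_ne1 x)]
  ring

lemma hasDerivAt_psi (k n : ℤ) (x : ℝ) :
    HasDerivAt (psi k n)
      ((n : ℂ) * psi (k+1) (n-1) x - ((n : ℂ) + (k : ℂ) + 1) * psi (k+1) n x) x := by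
  have hfun : psi k n = fun y : ℝ => ((y:ℂ) + I) ^ (-(k+1+n)) * ((y:ℂ) - I) ^ n := by
    funext y; exact psi_eq k n y
  rw [hfun]
  have h1 : HasDerivAt (fun z : ℂ => (z + I) ^ (-(k+1+n)))
      ((-(k+1+n) : ℂ) * ((x:ℂ) + I) ^ (-(k+1+n) - 1)) (x : ℂ) := by
    have := (hasDerivAt_zpow (-(k+1+n)) ((x:ℂ) + I) (Or.inl (psi_ne1 x))).comp (x : ℂ)
      ((hasDerivAt_id (x:ℂ)).add_const I)
    simpa [Function.comp_def] using this
  have h2 : HasDerivAt (fun z : ℂ => (z - I) ^ n)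
      ((n : ℂ) * ((x:ℂ) - I) ^ (n - 1)) (x : ℂ) := by
    have := (hasDerivAt_zpow n ((x:ℂ) - I) (Or.inl (psi_ne2 x))).comp (x : ℂ)
      ((hasDerivAt_id (x:ℂ)).sub_const I)
    simpa [Function.comp_def] using this
  have h := ((h1.mul h2).comp_ofReal)
  convert h using 1
  · rfl
  rw [psi_eq, psi_eq]
  rw [show -(k+1+1+(n-1)) = -(k+1+n) by ring, show -(k+1+1+n) = -(k+1+n) + -1 by ring,
    show -(k+1+n) - 1 = -(k+1+n) + -1 by ring, zpow_add₀ (psi_ne1 x)]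
  ring

lemma sum_shift (a b : ℤ) (g : ℤ → ℂ) :
    ∑ r ∈ Icc (a+1) (b+1), g r = ∑ r ∈ Icc a b, g (r+1) := by
  rw [← Finset.map_add_right_Icc a b 1, Finset.sum_map]
  rfl

lemma deriv_step {a b k : ℤ} {c : ℤ → ℂ} {f : ℝ → ℂ}
    (h0 : ∀ r, r ∉ Icc a b → c r = 0)
    (hf : ∀ x, f x = ∑ r ∈ Icc a b, c r * psi k r x) :
    ∀ x, deriv f x = ∑ r ∈ Icc (a-1) b,
      (((r:ℂ)+1) * c (r+1) - ((r:ℂ)+(k:ℂ)+1) * c r) * psi (k+1) r x := by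
  intro x
  have hfe : f = fun y => ∑ r ∈ Icc a b, c r * psi k r y := funext hf
  have hd : HasDerivAt f (∑ r ∈ Icc a b,
      c r * ((r:ℂ) * psi (k+1) (r-1) x - ((r:ℂ)+(k:ℂ)+1) * psi (k+1) r x)) x := by
    rw [hfe]
    exact HasDerivAt.fun_sum fun r _ => ((hasDerivAt_psi k r x).const_mul (c r))
  rw [hd.deriv]
  have e1 : ∑ r ∈ Icc a b, c r * ((r:ℂ) * psi (k+1) (r-1) x - ((r:ℂ)+(k:ℂ)+1) * psi (k+1) r x)
      = ∑ r ∈ Icc (a-1) (b+1),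
        c r * ((r:ℂ) * psi (k+1) (r-1) x - ((r:ℂ)+(k:ℂ)+1) * psi (k+1) r x) :=
    Finset.sum_subset (Icc_subset_Icc (by omega) (by omega))
      (fun r _ hr => by rw [h0 r (by simp only [mem_Icc] at *; omega)]; ring)
  have e2 : ∑ r ∈ Icc (a-1) (b+1),
        c r * ((r:ℂ) * psi (k+1) (r-1) x - ((r:ℂ)+(k:ℂ)+1) * psi (k+1) r x)
      = (∑ r ∈ Icc (a-1) (b+1), c r * (r:ℂ) * psi (k+1) (r-1) x)
        - ∑ r ∈ Icc (a-1) (b+1), ((r:ℂ)+(k:ℂ)+1) * c r * psi (k+1) r x := by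
    rw [← Finset.sum_sub_distrib]
    exact Finset.sum_congr rfl fun r _ => by ring
  have e3 : ∑ r ∈ Icc (a-1) (b+1), c r * (r:ℂ) * psi (k+1) (r-1) x
      = ∑ r ∈ Icc (a-1) (b+1), ((r:ℂ)+1) * c (r+1) * psi (k+1) r x := by
    have h1 : ∑ r ∈ Icc a (b+1), c r * (r:ℂ) * psi (k+1) (r-1) x
        = ∑ r ∈ Icc (a-1) (b+1), c r * (r:ℂ) * psi (k+1) (r-1) x :=
      Finset.sum_subset (Icc_subset_Icc (by omega) le_rfl)
        (fun r _ hr => by rw [h0 r (by simp only [mem_Icc] at *; omega)]; ring)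
    have h2 := sum_shift (a-1) b (fun r => c r * (r:ℂ) * psi (k+1) (r-1) x)
    rw [show (a-1)+1 = a by ring] at h2
    have h3 : ∑ r ∈ Icc (a-1) b, (fun r => c r * (r:ℂ) * psi (k+1) (r-1) x) (r+1)
        = ∑ r ∈ Icc (a-1) b, ((r:ℂ)+1) * c (r+1) * psi (k+1) r x := by
      refine Finset.sum_congr rfl fun r _ => ?_
      simp only
      push_cast
      ring_nf
    have h4 : ∑ r ∈ Icc (a-1) b, ((r:ℂ)+1) * c (r+1) * psi (k+1) r x
        = ∑ r ∈ Icc (a-1) (b+1), ((r:ℂ)+1) * c (r+1) * psi (k+1) r x :=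
      Finset.sum_subset (Icc_subset_Icc le_rfl (by omega))
        (fun r _ hr => by rw [h0 (r+1) (by simp only [mem_Icc] at *; omega)]; ring)
    rw [← h1, h2, h3, h4]
  have e4 : ∑ r ∈ Icc (a-1) b,
        (((r:ℂ)+1) * c (r+1) - ((r:ℂ)+(k:ℂ)+1) * c r) * psi (k+1) r x
      = ∑ r ∈ Icc (a-1) (b+1),
        (((r:ℂ)+1) * c (r+1) - ((r:ℂ)+(k:ℂ)+1) * c r) * psi (k+1) r x :=
    Finset.sum_subset (Icc_subset_Icc le_rfl (by omega))
      (fun r _ hr => by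
        rw [h0 r (by simp only [mem_Icc] at *; omega),
          h0 (r+1) (by simp only [mem_Icc] at *; omega)]
        ring)
  rw [e1, e2, e3, ← Finset.sum_sub_distrib, e4]
  exact Finset.sum_congr rfl fun r _ => by ring

lemma comb_step {g : ℝ → ℂ} {α β : ℂ} {k : ℤ}
    (hg : ∀ (r : ℤ) (x : ℝ), g x * psi k r x = α * psi (k-1) r x + β * psi (k-1) (r+1) x)
    {a b : ℤ} {c : ℤ → ℂ} {f : ℝ → ℂ}
    (h0 : ∀ r, r ∉ Icc a b → c r = 0)
    (hf : ∀ x, f x = ∑ r ∈ Icc a b, c r * psi k r x) :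
    ∀ x, g x * f x = ∑ r ∈ Icc a (b+1), (α * c r + β * c (r-1)) * psi (k-1) r x := by
  intro x
  rw [hf x, Finset.mul_sum]
  have h1 : ∀ r ∈ Icc a b, g x * (c r * psi k r x)
      = α * c r * psi (k-1) r x + β * c r * psi (k-1) (r+1) x := by
    intro r _
    have := hg r x
    linear_combination c r * this
  rw [Finset.sum_congr rfl h1, Finset.sum_add_distrib]
  have h2 : ∑ r ∈ Icc a b, α * c r * psi (k-1) r x
      = ∑ r ∈ Icc a (b+1), α * c r * psi (k-1) r x :=
    Finset.sum_subset (Icc_subset_Icc le_rfl (by omega))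
      (fun r _ hr => by rw [h0 r (by simp only [mem_Icc] at *; omega)]; ring)
  have h3 : ∑ r ∈ Icc a b, β * c r * psi (k-1) (r+1) x
      = ∑ r ∈ Icc a (b+1), β * c (r-1) * psi (k-1) r x := by
    have hs := sum_shift a b (fun r => β * c (r-1) * psi (k-1) r x)
    have hc : ∑ r ∈ Icc a b, (fun r => β * c (r-1) * psi (k-1) r x) (r+1)
        = ∑ r ∈ Icc a b, β * c r * psi (k-1) (r+1) x := by
      refine Finset.sum_congr rfl fun r _ => ?_
      norm_num
    rw [← hc, ← hs]
    exact (Finset.sum_subset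
      (show Icc (a+1) (b+1) ⊆ Icc a (b+1) from Icc_subset_Icc (by omega) le_rfl)
      (fun r _ hr => by rw [h0 (r-1) (by simp only [mem_Icc] at *; omega)]; ring))
  rw [h2, h3, ← Finset.sum_add_distrib]
  exact Finset.sum_congr rfl fun r _ => by ring

noncomputable def coefD (k₀ n : ℤ) : ℕ → (ℤ → ℂ)
  | 0 => fun r => if r = n then 1 else 0
  | (i+1) => fun r =>
      ((r:ℂ)+1) * coefD k₀ n i (r+1) - ((r:ℂ)+((k₀:ℂ)+(i:ℂ))+1) * coefD k₀ n i r

lemma stageD (k₀ n : ℤ) (m : ℕ) :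
    (∀ r, r ∉ Icc (n - m) n → coefD k₀ n m r = 0) ∧
    (∀ x, deriv^[m] (psi k₀ n) x
      = ∑ r ∈ Icc (n - m) n, coefD k₀ n m r * psi (k₀ + m) r x) ∧
    coefD k₀ n m (n - m) = ∏ t ∈ Icc 1 m, ((n:ℂ) - (t:ℂ) + 1) ∧
    coefD k₀ n m n = (-1:ℂ)^m * ∏ t ∈ Icc 1 m, ((n:ℂ) + (t:ℂ) + (k₀:ℂ)) := by
  induction m with
  | zero =>
    refine ⟨?_, ?_, ?_, ?_⟩
    · intro r hr
      simp only [Nat.cast_zero, sub_zero, mem_Icc] at hr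
      have hrn : r ≠ n := by omega
      simp [coefD, hrn]
    · intro x
      simp [coefD]
    · simp [coefD]
    · simp [coefD]
  | succ m ih =>
    obtain ⟨hsupp, hsum, hlow, hhigh⟩ := ih
    have key := deriv_step hsupp hsum
    have hint : n - ((m:ℤ)+1) = (n - m) - 1 := by ring
    have hcoef : ∀ r : ℤ, coefD k₀ n (m+1) r
        = ((r:ℂ)+1) * coefD k₀ n m (r+1) - ((r:ℂ)+((k₀:ℤ)+(m:ℤ) : ℤ)+1) * coefD k₀ n m r := by
      intro r
      simp only [coefD]
      push_cast
      ring
    refine ⟨?_, ?_, ?_, ?_⟩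
    · intro r hr
      rw [hcoef]
      rw [hsupp r (by simp only [mem_Icc] at *; push_cast at *; omega),
        hsupp (r+1) (by simp only [mem_Icc] at *; push_cast at *; omega)]
      ring
    · intro x
      rw [Function.iterate_succ_apply', key x]
      rw [show (n : ℤ) - ((m:ℕ)+1 : ℕ) = (n - m) - 1 by push_cast; ring,
        show (k₀ : ℤ) + ((m:ℕ)+1 : ℕ) = (k₀ + m) + 1 by push_cast; ring]
      exact Finset.sum_congr rfl fun r _ => by rw [hcoef]
    · rw [show (n : ℤ) - ((m:ℕ)+1 : ℕ) = (n - m) - 1 by push_cast; ring, hcoef,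
        show (n:ℤ) - m - 1 + 1 = n - m by ring, hlow,
        hsupp (n - m - 1) (by simp only [mem_Icc]; omega),
        Finset.prod_Icc_succ_top (Nat.one_le_iff_ne_zero.mpr (Nat.succ_ne_zero m))]
      push_cast
      ring
    · rw [hcoef, hhigh, hsupp (n+1) (by simp only [mem_Icc]; omega),
        Finset.prod_Icc_succ_top (Nat.one_le_iff_ne_zero.mpr (Nat.succ_ne_zero m))]
      push_cast
      ring

noncomputable def coefM (α β : ℂ) (c : ℤ → ℂ) : ℕ → (ℤ → ℂ)
  | 0 => c
  | (i+1) => fun r => α * coefM α β c i r + β * coefM α β c i (r-1)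

lemma stageM {g : ℝ → ℂ} {α β : ℂ}
    (hg : ∀ (k r : ℤ) (x : ℝ), g x * psi k r x = α * psi (k-1) r x + β * psi (k-1) (r+1) x)
    {a b k : ℤ} {c : ℤ → ℂ} {f : ℝ → ℂ}
    (h0 : ∀ r, r ∉ Icc a b → c r = 0)
    (hf : ∀ x, f x = ∑ r ∈ Icc a b, c r * psi k r x) :
    ∀ i : ℕ,
      (∀ r, r ∉ Icc a (b + i) → coefM α β c i r = 0) ∧
      (∀ x, (g x)^i * f x = ∑ r ∈ Icc a (b + i), coefM α β c i r * psi (k - i) r x) ∧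
      coefM α β c i a = α^i * c a ∧
      coefM α β c i (b + i) = β^i * c b := by
  intro i
  induction i with
  | zero =>
    refine ⟨?_, ?_, by simp [coefM], by simp [coefM]⟩
    · intro r hr
      exact h0 r (by simpa using hr)
    · intro x
      simpa [coefM] using hf x
  | succ i ih =>
    obtain ⟨hsupp, hsum, hlow, hhigh⟩ := ih
    have key := comb_step (hg (k - i)) hsupp (fun x => hsum x)
    refine ⟨?_, ?_, ?_, ?_⟩
    · intro r hr
      simp only [coefM]
      rw [hsupp r (by simp only [mem_Icc] at *; push_cast at *; omega),
        hsupp (r-1) (by simp only [mem_Icc] at *; push_cast at *; omega)]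
      ring
    · intro x
      have : (g x)^(i+1) * f x = g x * ((g x)^i * f x) := by ring
      rw [this, key x,
        show (b : ℤ) + ((i:ℕ)+1 : ℕ) = (b + i) + 1 by push_cast; ring,
        show (k : ℤ) - ((i:ℕ)+1 : ℕ) = (k - i) - 1 by push_cast; ring]
      rfl
    · simp only [coefM]
      rw [hlow, hsupp (a-1) (by simp only [mem_Icc]; omega)]
      ring
    · rw [show (b : ℤ) + ((i:ℕ)+1 : ℕ) = (b + i) + 1 by push_cast; ring]
      simp only [coefM]
      rw [show (b:ℤ) + i + 1 - 1 = b + i by ring, hhigh,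
        hsupp (b + i + 1) (by simp only [mem_Icc]; omega)]
      ring

/-- For `k₀, j, m ∈ ℕ`, `κ ∈ ℤ` with `κ ≤ k₀ + m - j`, and `n ∈ ℤ`,
the function `x^j (d/dx)^m ψ_{k₀,n}` is a linear combination
`Σ_{r = n-m}^{n+m+k₀-κ} c_r ψ_{κ,r}`, with outermost coefficients
`c_{n-m} = (-i/2)^{k₀-κ-j+m} (1/2)^j Π_{t=1}^m (n - t + 1)` and
`c_{n+m+k₀-κ} = (i/2)^{k₀-κ-j+m} (1/2)^j (-1)^m Π_{t=1}^m (n + t + k₀)`. -/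
theorem stmt8 (k₀ j m : ℕ) (κ : ℤ) (hκ : κ ≤ (k₀ : ℤ) + (m : ℤ) - (j : ℤ)) (n : ℤ) :
    ∃ c : ℤ → ℂ,
      (∀ x : ℝ, ((x : ℂ)) ^ j * deriv^[m] (psi (k₀ : ℤ) n) x =
        ∑ r ∈ Finset.Icc (n - (m : ℤ)) (n + (m : ℤ) + (k₀ : ℤ) - κ), c r * psi κ r x) ∧
      c (n - (m : ℤ)) =
        (-(Complex.I / 2)) ^ ((k₀ : ℤ) - κ - (j : ℤ) + (m : ℤ)) * ((1 : ℂ) / 2) ^ j *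
          ∏ t ∈ Finset.Icc 1 m, ((n : ℂ) - (t : ℂ) + 1) ∧
      c (n + (m : ℤ) + (k₀ : ℤ) - κ) =
        (Complex.I / 2) ^ ((k₀ : ℤ) - κ - (j : ℤ) + (m : ℤ)) * ((1 : ℂ) / 2) ^ j *
          (-1 : ℂ) ^ m * ∏ t ∈ Finset.Icc 1 m, ((n : ℂ) + (t : ℂ) + (k₀ : ℂ)) := by
  obtain ⟨hDs, hDsum, hDlow, hDhigh⟩ := stageD (k₀ : ℤ) n m
  have hgx : ∀ (k r : ℤ) (x : ℝ), (x:ℂ) * psi k r x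
      = (1/2 : ℂ) * psi (k-1) r x + (1/2 : ℂ) * psi (k-1) (r+1) x :=
    fun k r x => psi_mul_x k r x
  obtain ⟨hXs, hXsum, hXlow, hXhigh⟩ := stageM hgx hDs hDsum j
  have hgl : ∀ (k r : ℤ) (x : ℝ), (fun _ : ℝ => (1:ℂ)) x * psi k r x
      = (-(I/2)) * psi (k-1) r x + (I/2) * psi (k-1) (r+1) x :=
    fun k r x => by rw [one_mul]; exact psi_lower k r x
  set d : ℕ := ((k₀:ℤ) + m - j - κ).toNat with hd
  have hdz : (d:ℤ) = (k₀:ℤ) + m - j - κ := Int.toNat_of_nonneg (by omega)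
  obtain ⟨hLs, hLsum, hLlow, hLhigh⟩ :=
    stageM (f := fun x : ℝ => ((x:ℂ))^j * deriv^[m] (psi (k₀:ℤ) n) x) hgl hXs hXsum d
  refine ⟨coefM (-(I/2)) (I/2) (coefM (1/2) (1/2) (coefD (k₀:ℤ) n m) j) d, ?_, ?_, ?_⟩
  · intro x
    have := hLsum x
    simp only [one_pow, one_mul] at this
    rw [show (n:ℤ) + (m:ℤ) + (k₀:ℤ) - κ = n + (j:ℤ) + (d:ℤ) by omega,
      show κ = (k₀:ℤ) + (m:ℤ) - (j:ℤ) - (d:ℤ) by omega]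
    exact this
  · rw [hLlow, hXlow, hDlow,
      show (k₀:ℤ) - κ - (j:ℤ) + (m:ℤ) = (d:ℤ) by omega, zpow_natCast]
    ring
  · rw [show (n:ℤ) + (m:ℤ) + (k₀:ℤ) - κ = n + (j:ℤ) + (d:ℤ) by omega,
      hLhigh, hXhigh, hDhigh,
      show (k₀:ℤ) - κ - (j:ℤ) + (m:ℤ) = (d:ℤ) by omega, zpow_natCast]
    push_cast
    ring
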